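/- Let G be an infinite FC-group with finitely many automorphism orbits. If ω(G) is odd, then G has finite exponent. -/

import Mathlib

/-- The number of automorphism orbits of a group `G`: the number of orbits of the
natural action of `Aut(G)` on `G`. -/
noncomputable def omegaOrbits (G : Type*) [Group G] : ℕ :=
  Nat.card (Quotient (MulAction.orbitRel (MulAut G) G))

/-- `G` is an FC-group: every element has a finite conjugacy class. -/
def IsFCGroup (G : Type*) [Group G] : Prop :=
  ∀ g : G, {h : G | IsConj g h}.Finite

/-- `G` has finitely many automorphism orbits. -/
def HasFinitelyManyAutOrbits (G : Type*) [Group G] : Prop :=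
  Finite (Quotient (MulAction.orbitRel (MulAut G) G))

open Subgroup MulAction

namespace Stmt9

variable {G : Type*} [Group G]

abbrev Orb (G : Type*) [Group G] := Quotient (MulAction.orbitRel (MulAut G) G)

noncomputable def ob (g : G) : Orb G := Quotient.mk _ g

lemma ob_eq_ob {g h : G} : ob g = ob h ↔ ∃ φ : MulAut G, φ h = g := by
  constructor
  · intro hq
    have h1 : g ∈ MulAction.orbit (MulAut G) h := Quotient.exact hq
    obtain ⟨φ, hφ⟩ := MulAction.mem_orbit_iff.mp h1
    exact ⟨φ, hφ⟩
  · rintro ⟨φ, rfl⟩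
    exact Quotient.sound (MulAction.mem_orbit h φ)

lemma orderOf_aut (φ : MulAut G) (g : G) : orderOf (φ g) = orderOf g :=
  orderOf_injective φ.toMonoidHom φ.injective g

lemma exists_exponent [Finite (Orb G)] :
    ∃ e : ℕ, 0 < e ∧ ∀ g : G, IsOfFinOrder g → g ^ e = 1 := by
  classical
  cases nonempty_fintype (Orb G)
  refine ⟨∏ ω : Orb G, max 1 (orderOf ω.out), Finset.prod_pos (fun i _ => by positivity), ?_⟩
  intro g hg
  have h1 : ob ((ob g).out) = ob g := Quotient.out_eq _
  obtain ⟨φ, hφ⟩ := ob_eq_ob.mp h1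
  have h2 : orderOf ((ob g).out) = orderOf g := by rw [← hφ, orderOf_aut]
  have hmax : max 1 (orderOf ((ob g).out)) = orderOf g := by
    rw [h2]; exact max_eq_right hg.orderOf_pos
  rw [← orderOf_dvd_iff_pow_eq_one, ← hmax]
  exact Finset.dvd_prod_of_mem _ (Finset.mem_univ (ob g))

lemma isConj_aut (φ : MulAut G) {g h : G} (hc : IsConj g h) : IsConj (φ g) (φ h) := by
  obtain ⟨c, hc⟩ := isConj_iff.mp hc
  exact isConj_iff.mpr ⟨φ c, by rw [← map_inv, ← map_mul, ← map_mul, hc]⟩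

lemma card_class_aut (φ : MulAut G) (g : G) :
    Nat.card {h : G | IsConj (φ g) h} = Nat.card {h : G | IsConj g h} := by
  refine (Nat.card_congr (Equiv.subtypeEquiv φ.toEquiv (fun h => ?_))).symm
  constructor
  · exact fun hc => isConj_aut φ hc
  · intro hc
    have := isConj_aut φ.symm hc
    simpa using this

lemma exists_classBound [Finite (Orb G)] :
    ∃ c : ℕ, ∀ g : G, Nat.card {h : G | IsConj g h} ≤ c := by
  classical
  cases nonempty_fintype (Orb G)
  refine ⟨Finset.univ.sup (fun ω : Orb G => Nat.card {h : G | IsConj ω.out h}), fun g => ?_⟩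
  obtain ⟨φ, hφ⟩ := ob_eq_ob.mp (Quotient.out_eq (ob g) : ob ((ob g).out) = ob g)
  have h5 : Nat.card {h : G | IsConj g h} = Nat.card {h : G | IsConj (ob g).out h} := by
    rw [← hφ, card_class_aut]
  rw [h5]
  exact Finset.le_sup (f := fun ω : Orb G => Nat.card {h : G | IsConj ω.out h})
    (Finset.mem_univ _)

lemma pow_factorial_mem_center (hFC : ∀ g : G, {h : G | IsConj g h}.Finite)
    {c : ℕ} (hc : ∀ g : G, Nat.card {h : G | IsConj g h} ≤ c) (g : G) :
    g ^ (Nat.factorial c) ∈ Subgroup.center G := by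
  rw [Subgroup.mem_center_iff]
  intro x
  suffices h : Commute (g ^ (Nat.factorial c)) x by exact h.symm
  -- pigeonhole to find 0 < q ≤ c with Commute (g^q) x
  obtain ⟨q, hq0, hqc, hq⟩ : ∃ q : ℕ, 0 < q ∧ q ≤ c ∧ Commute (g ^ q) x := by
    haveI : Fintype {h : G | IsConj x h} := (hFC x).fintype
    have hcard : Fintype.card {h : G | IsConj x h} < Fintype.card (Fin (c + 1)) := by
      rw [Fintype.card_fin, Nat.lt_succ_iff, ← Nat.card_eq_fintype_card]
      exact hc x
    obtain ⟨i, j, hne, hij⟩ := Fintype.exists_ne_map_eq_of_card_lt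
      (fun i : Fin (c + 1) => (⟨g ^ (i : ℕ) * x * (g ^ (i : ℕ))⁻¹,
        isConj_iff.mpr ⟨g ^ (i : ℕ), rfl⟩⟩ : {h : G | IsConj x h})) hcard
    have key : ∀ i j : Fin (c + 1), (i : ℕ) < (j : ℕ) →
        g ^ (i : ℕ) * x * (g ^ (i : ℕ))⁻¹ = g ^ (j : ℕ) * x * (g ^ (j : ℕ))⁻¹ →
        ∃ q : ℕ, 0 < q ∧ q ≤ c ∧ Commute (g ^ q) x := by
      intro i j hlt hval
      refine ⟨(j : ℕ) - (i : ℕ), Nat.sub_pos_of_lt hlt, ?_, ?_⟩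
      · exact le_trans (Nat.sub_le _ _) (Nat.lt_succ_iff.mp j.isLt)
      · have hpow : g ^ (i : ℕ) * g ^ ((j : ℕ) - (i : ℕ)) = g ^ (j : ℕ) := by
          rw [← pow_add, Nat.add_sub_cancel' hlt.le]
        have h2 : x = (g ^ (i:ℕ))⁻¹ * g ^ (j:ℕ) * x * ((g ^ (i:ℕ))⁻¹ * g ^ (j:ℕ))⁻¹ := by
          rw [mul_inv_rev, inv_inv]
          calc x = (g ^ (i:ℕ))⁻¹ * (g ^ (i:ℕ) * x * (g ^ (i:ℕ))⁻¹) * g ^ (i:ℕ) := by group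
          _ = (g ^ (i:ℕ))⁻¹ * (g ^ (j:ℕ) * x * (g ^ (j:ℕ))⁻¹) * g ^ (i:ℕ) := by rw [hval]
          _ = _ := by group
        have h3 : (g ^ (i:ℕ))⁻¹ * g ^ (j:ℕ) = g ^ ((j : ℕ) - (i : ℕ)) := by
          rw [← hpow]; group
        rw [h3] at h2
        have h4 := h2.symm
        rw [mul_inv_eq_iff_eq_mul] at h4
        exact h4
    rcases hne.lt_or_gt with hlt | hlt
    · exact key i j hlt (by simpa [Subtype.ext_iff] using hij)
    · exact key j i hlt (by simpa [Subtype.ext_iff] using hij.symm)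
  obtain ⟨m, hm⟩ : q ∣ Nat.factorial c := Nat.dvd_factorial hq0 hqc
  rw [hm, pow_mul]
  exact hq.pow_left m

lemma aut_mem_center (φ : MulAut G) {z : G} (hz : z ∈ center G) : φ z ∈ center G := by
  rw [Subgroup.mem_center_iff] at hz ⊢
  intro x
  have := hz (φ.symm x)
  calc x * φ z = φ (φ.symm x * z) := by simp [map_mul]
  _ = φ (z * φ.symm x) := by rw [this]
  _ = φ z * x := by simp [map_mul]

/-- the key divisibility consequence of finitely many orbits -/
lemma center_pow_div [Finite (Orb G)] {e : ℕ} (he : 0 < e)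
    (hetor : ∀ g : G, IsOfFinOrder g → g ^ e = 1)
    {a : G} (ha : a ∈ center G) {n : ℕ} (hn : 0 < n) :
    ∃ z ∈ center G, z ^ n = a ^ e := by
  rcases eq_or_lt_of_le (show 1 ≤ n from hn) with h1 | h2
  · exact ⟨a ^ e, Subgroup.pow_mem _ ha e, by rw [← h1, pow_one]⟩
  -- n ≥ 2; find repetition among orbits of a ^ (n ^ i)
  obtain ⟨i, j, hne, hij⟩ := Finite.exists_ne_map_eq_of_infinite
    (fun i : ℕ => ob (a ^ (n ^ i)))
  wlog hlt : i < j generalizing i j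
  · exact this j i hne.symm hij.symm ((hne.lt_or_gt).resolve_left hlt)
  obtain ⟨φ, hφ⟩ := ob_eq_ob.mp hij
  -- φ (a ^ (n^j)) = a ^ (n^i)
  set b := φ a with hb
  have hbc : b ∈ center G := aut_mem_center φ ha
  have hphi : b ^ (n ^ j) = a ^ (n ^ i) := by rw [hb, ← map_pow, hφ]
  have hkey : (b ^ (n ^ (j - i))) ^ (n ^ i) = a ^ (n ^ i) := by
    rw [← pow_mul, ← pow_add, Nat.sub_add_cancel hlt.le]
    exact hphi
  -- t := b ^ (n ^ (j-i)) * a⁻¹ is torsion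
  have hcomm : Commute (b ^ (n ^ (j - i))) a⁻¹ := by
    have := (Subgroup.mem_center_iff.mp (Subgroup.pow_mem _ hbc (n ^ (j-i)))) a⁻¹
    exact this.symm
  have ht : (b ^ (n ^ (j - i)) * a⁻¹) ^ (n ^ i) = 1 := by
    rw [hcomm.mul_pow, hkey, inv_pow, mul_inv_cancel]
  have htor : IsOfFinOrder (b ^ (n ^ (j - i)) * a⁻¹) :=
    isOfFinOrder_iff_pow_eq_one.mpr ⟨n ^ i, by positivity, ht⟩
  have hte : (b ^ (n ^ (j - i)) * a⁻¹) ^ e = 1 := hetor _ htor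
  -- hence a ^ e = b ^ (e * n^(j-i)) = (b ^ (e * n^(j-i-1))) ^ n
  have hae : a ^ e = (b ^ (n ^ (j - i))) ^ e := by
    rw [hcomm.mul_pow, inv_pow] at hte
    have := hte
    rw [mul_inv_eq_one] at this
    exact this.symm
  have hji : n ^ (j - i) = n ^ (j - i - 1) * n := by
    rw [← pow_succ, Nat.sub_add_cancel]
    omega
  refine ⟨b ^ (n ^ (j - i - 1) * e), Subgroup.pow_mem _ hbc _, ?_⟩
  rw [hae, ← pow_mul, ← pow_mul, hji]
  ring_nf

/-- The set of elements divisible inside the center; a characteristic central subgroup. -/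
def Dgrp (G : Type*) [Group G] : Subgroup G where
  carrier := {g : G | ∀ n : ℕ, 0 < n → ∃ z ∈ center G, z ^ n = g}
  one_mem' := fun n _ => ⟨1, Subgroup.one_mem _, one_pow n⟩
  mul_mem' := by
    rintro a b ha hb n hn
    obtain ⟨z, hz, hza⟩ := ha n hn
    obtain ⟨w, hw, hwb⟩ := hb n hn
    refine ⟨z * w, Subgroup.mul_mem _ hz hw, ?_⟩
    have hcomm : Commute z w := (Subgroup.mem_center_iff.mp hz w).symm
    rw [hcomm.mul_pow, hza, hwb]
  inv_mem' := by
    rintro a ha n hn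
    obtain ⟨z, hz, hza⟩ := ha n hn
    exact ⟨z⁻¹, Subgroup.inv_mem _ hz, by rw [inv_pow, hza]⟩

lemma Dgrp_le_center : Dgrp G ≤ center G := by
  intro g hg
  obtain ⟨z, hz, hza⟩ := hg 1 one_pos
  rw [pow_one] at hza
  rwa [← hza]
  
lemma Dgrp_aut (φ : MulAut G) {g : G} (hg : g ∈ Dgrp G) : φ g ∈ Dgrp G := by
  intro n hn
  obtain ⟨z, hz, hza⟩ := hg n hn
  exact ⟨φ z, aut_mem_center φ hz, by rw [← map_pow, hza]⟩

lemma Dgrp_torsionfree {e : ℕ} (he : 0 < e)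
    (hetor : ∀ g : G, IsOfFinOrder g → g ^ e = 1)
    {g : G} (hg : g ∈ Dgrp G) (htor : IsOfFinOrder g) : g = 1 := by
  obtain ⟨z, hz, hza⟩ := hg e he
  obtain ⟨m, hm, hgm⟩ := (isOfFinOrder_iff_pow_eq_one).mp htor
  have : IsOfFinOrder z := isOfFinOrder_iff_pow_eq_one.mpr
    ⟨e * m, by positivity, by rw [pow_mul, hza, hgm]⟩
  rw [← hza, hetor z this]

lemma Dgrp_divisible [Finite (Orb G)] {e : ℕ} (he : 0 < e)
    (hetor : ∀ g : G, IsOfFinOrder g → g ^ e = 1)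
    {g : G} (hg : g ∈ Dgrp G) {n : ℕ} (hn : 0 < n) :
    ∃ d ∈ Dgrp G, d ^ n = g := by
  obtain ⟨u, hu, hun⟩ := hg (n * e) (by positivity)
  refine ⟨u ^ e, ?_, by rw [← pow_mul, mul_comm e n, hun]⟩
  intro m hm
  obtain ⟨z, hz, hzm⟩ := hg (m * (n * e)) (by positivity)
  have h1 : ((z ^ m) * u⁻¹) ^ (n * e) = 1 := by
    have hcomm : Commute (z ^ m) u⁻¹ :=
      ((Subgroup.mem_center_iff.mp (Subgroup.pow_mem _ hz m)) u⁻¹).symm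
    have hz2 : (z ^ m) ^ (n * e) = z ^ (m * (n * e)) := (pow_mul z m (n * e)).symm
    rw [hcomm.mul_pow, inv_pow, hz2, hzm, ← hun, mul_inv_cancel]
  have htz : IsOfFinOrder (z ^ m * u⁻¹) :=
    isOfFinOrder_iff_pow_eq_one.mpr ⟨n * e, by positivity, h1⟩
  have h2 : (z ^ m * u⁻¹) ^ e = 1 := hetor _ htz
  have hcomm : Commute (z ^ m) u⁻¹ :=
    ((Subgroup.mem_center_iff.mp (Subgroup.pow_mem _ hz m)) u⁻¹).symm
  rw [hcomm.mul_pow, inv_pow, mul_inv_eq_one] at h2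
  refine ⟨z ^ e, Subgroup.pow_mem _ hz _, ?_⟩
  rw [← pow_mul, mul_comm e m, pow_mul, h2]

lemma centralizer_finiteIndex (hFC : ∀ g : G, {h : G | IsConj g h}.Finite) (x : G) :
    (Subgroup.centralizer {x}).FiniteIndex := by
  have horb : (MulAction.orbit (ConjAct G) x).Finite := by
    have : MulAction.orbit (ConjAct G) x ⊆ {h : G | IsConj x h} := by
      intro h hh
      exact (ConjAct.mem_orbit_conjAct.mp hh).symm
    exact (hFC x).subset this
  haveI : Finite (MulAction.orbit (ConjAct G) x) := horb
  haveI : Finite (ConjAct G ⧸ MulAction.stabilizer (ConjAct G) x) :=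
    Finite.of_equiv _ (MulAction.orbitEquivQuotientStabilizer (ConjAct G) x)
  haveI : (MulAction.stabilizer (ConjAct G) x).FiniteIndex :=
    Subgroup.finiteIndex_of_finite_quotient
  rw [Subgroup.centralizer_eq_comap_stabilizer]
  constructor
  have := Subgroup.index_comap_of_surjective (MulAction.stabilizer (ConjAct G) x)
    (f := ConjAct.toConjAct.toMonoidHom) (MulEquiv.surjective ConjAct.toConjAct)
  exact fun h0 => Subgroup.FiniteIndex.index_ne_zero (this.symm.trans h0)

lemma closure_center_finiteIndex (hFC : ∀ g : G, {h : G | IsConj g h}.Finite) (S : Finset G) :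
    (center ↥(Subgroup.closure (S : Set G))).FiniteIndex := by
  set H : Subgroup G := Subgroup.closure (S : Set G)
  set K : Subgroup G := ⨅ s : S, Subgroup.centralizer {(s : G)}
  haveI hKfi : K.FiniteIndex := Subgroup.finiteIndex_iInf (fun s => centralizer_finiteIndex hFC s)
  have hle : K.subgroupOf H ≤ center ↥H := by
    rintro ⟨k, hkH⟩ hk
    have hkK : k ∈ K := hk
    rw [Subgroup.mem_center_iff]
    rintro ⟨h, hhH⟩
    have : ∀ x ∈ H, x * k = k * x := by
      intro x hx
      refine Subgroup.closure_induction (fun y hy => ?_) (by simp) ?_ ?_ hx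
      · have := Subgroup.mem_iInf.mp hkK ⟨y, hy⟩
        have := this y (by simp)
        -- this : y * k = k * y ?? centralizer def: k ∈ centralizer {y} ↔ ∀ y ∈ {y}, y * k = k * y
        exact this
      · intro x y _ _ hx hy
        rw [mul_assoc, hy, ← mul_assoc, hx, mul_assoc]
      · intro x _ hx
        calc x⁻¹ * k = x⁻¹ * k * x * x⁻¹ := by group
        _ = x⁻¹ * (x * k) * x⁻¹ := by rw [mul_assoc x⁻¹ k x, ← hx]
        _ = k * x⁻¹ := by group
    exact Subtype.ext (this h hhH)
  haveI : (K.subgroupOf H).FiniteIndex := Subgroup.instFiniteIndex_subgroupOf K H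
  constructor
  have hdvd := Subgroup.index_dvd_of_le hle
  intro h0
  rw [h0] at hdvd
  exact Subgroup.FiniteIndex.index_ne_zero (Nat.eq_zero_of_zero_dvd hdvd)

lemma commutator_mem_torsion (hFC : ∀ g : G, {h : G | IsConj g h}.Finite)
    {w : G} (hw : w ∈ commutator G) : IsOfFinOrder w := by
  -- first: w lies in the commutator subgroup of a finitely generated subgroup
  classical
  have mono : ∀ (S T : Finset G), S ⊆ T →
      ⁅Subgroup.closure (S : Set G), Subgroup.closure (S : Set G)⁆ ≤
      ⁅Subgroup.closure (T : Set G), Subgroup.closure (T : Set G)⁆ := by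
    intro S T h
    have h2 : (S : Set G) ⊆ (T : Set G) := by exact_mod_cast h
    exact Subgroup.commutator_mono (Subgroup.closure_mono h2) (Subgroup.closure_mono h2)
  have key : ∃ S : Finset G, w ∈ ⁅Subgroup.closure (S : Set G), Subgroup.closure (S : Set G)⁆ := by
    rw [commutator_eq_closure] at hw
    refine Subgroup.closure_induction (fun y hy => ?_) ?_ ?_ ?_ hw
    · obtain ⟨g, h, rfl⟩ := hy
      refine ⟨{g, h}, Subgroup.commutator_mem_commutator ?_ ?_⟩
      · exact Subgroup.subset_closure (by simp)
      · exact Subgroup.subset_closure (by simp)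
    · exact ⟨∅, Subgroup.one_mem _⟩
    · rintro x y _ _ ⟨S₁, hS₁⟩ ⟨S₂, hS₂⟩
      exact ⟨S₁ ∪ S₂, Subgroup.mul_mem _
        (mono S₁ (S₁ ∪ S₂) Finset.subset_union_left hS₁)
        (mono S₂ (S₁ ∪ S₂) Finset.subset_union_right hS₂)⟩
    · rintro x _ ⟨S, hS⟩
      exact ⟨S, Subgroup.inv_mem _ hS⟩
  obtain ⟨S, hS⟩ := key
  set H : Subgroup G := Subgroup.closure (S : Set G)
  haveI : (center ↥H).FiniteIndex := closure_center_finiteIndex hFC S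
  -- w comes from an element of commutator ↥H
  have hmap : ⁅H, H⁆ = Subgroup.map H.subtype (commutator ↥H) := by
    rw [commutator_def, Subgroup.map_commutator, ← MonoidHom.range_eq_map, Subgroup.range_subtype]
  rw [hmap] at hS
  obtain ⟨w', hw', hww⟩ := hS
  -- transfer kills w'
  have hker : w' ∈ (MonoidHom.transferCenterPow ↥H).ker := by
    have hcomm : commutator ↥H ≤ (MonoidHom.transferCenterPow ↥H).ker := by
      rw [commutator_eq_closure, Subgroup.closure_le]
      rintro _ ⟨p, q, rfl⟩
      rw [SetLike.mem_coe, MonoidHom.mem_ker, commutatorElement_def, map_mul, map_mul, map_mul,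
        map_inv, map_inv]
      have hc : MonoidHom.transferCenterPow ↥H p * MonoidHom.transferCenterPow ↥H q =
          MonoidHom.transferCenterPow ↥H q * MonoidHom.transferCenterPow ↥H p :=
        Subtype.ext (Subgroup.mem_center_iff.mp (MonoidHom.transferCenterPow ↥H q).2
          (MonoidHom.transferCenterPow ↥H p : ↥H))
      rw [hc]
      group
    exact hcomm hw'
  have hpow : w' ^ (center ↥H).index = 1 := by
    have := MonoidHom.transferCenterPow_apply (G := ↥H) w'
    rw [MonoidHom.mem_ker.mp hker] at this
    rw [← this]
    simp
  refine isOfFinOrder_iff_pow_eq_one.mpr ⟨(center ↥H).index,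
    Nat.pos_of_ne_zero Subgroup.FiniteIndex.index_ne_zero, ?_⟩
  rw [← hww, ← map_pow, hpow, map_one]

section QMod
variable {A : Type*} [AddCommGroup A]

lemma rat_aux (r : ℚ) : (r.num : ℚ) = r * r.den := by
  have h : (r.den : ℚ) ≠ 0 := by exact_mod_cast r.den_nz
  exact (div_eq_iff h).mp (Rat.num_div_den r)

lemma rat_cross_mul (p q : ℚ) :
    (p * q).num * ((p.den : ℤ) * q.den) = (p.num * q.num) * ((p * q).den : ℤ) := by
  have := @Int.cast_injective ℚ _
  apply this
  push_cast
  rw [rat_aux, rat_aux, rat_aux]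
  ring

lemma rat_cross_add (p q : ℚ) :
    (p + q).num * ((p.den : ℤ) * q.den) =
      (p.num * q.den + q.num * p.den) * ((p + q).den : ℤ) := by
  have := @Int.cast_injective ℚ _
  apply this
  push_cast
  rw [rat_aux, rat_aux, rat_aux]
  ring

variable (hdiv : ∀ n : ℤ, n ≠ 0 → ∀ a : A, ∃ b : A, n • b = a)
variable (htf : ∀ (n : ℤ) (a : A), n ≠ 0 → n • a = 0 → a = 0)

noncomputable def qsmul (q : ℚ) (a : A) : A :=
  (hdiv (q.den : ℤ) (by exact_mod_cast q.den_nz) (q.num • a)).choose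

lemma qsmul_spec (q : ℚ) (a : A) : (q.den : ℤ) • qsmul hdiv q a = q.num • a :=
  (hdiv (q.den : ℤ) (by exact_mod_cast q.den_nz) (q.num • a)).choose_spec

include htf in
lemma smul_cancel {n : ℤ} (hn : n ≠ 0) {a b : A} (h : n • a = n • b) : a = b := by
  have h2 : n • (a - b) = 0 := by rw [smul_sub, h, sub_self]
  have := htf n (a - b) hn h2
  rwa [sub_eq_zero] at this

noncomputable def qmodule : Module ℚ A := by
  letI : SMul ℚ A := ⟨qsmul hdiv⟩
  have spec : ∀ (q : ℚ) (a : A), (q.den : ℤ) • (q • a) = q.num • a := qsmul_spec hdiv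
  have dz : ∀ q : ℚ, ((q.den : ℤ) : ℤ) ≠ 0 := fun q => by exact_mod_cast q.den_nz
  refine Module.ofMinimalAxioms ?_ ?_ ?_ ?_
  · -- smul_add
    intro r x y
    apply smul_cancel htf (dz r)
    rw [spec, smul_add, smul_add, spec, spec]
  · -- add_smul
    intro r s x
    apply smul_cancel htf (n := ((r + s).den : ℤ) * ((r.den : ℤ) * s.den))
      (by exact mul_ne_zero (dz _) (mul_ne_zero (dz _) (dz _)))
    rw [smul_add]
    rw [show (((r + s).den : ℤ) * ((r.den : ℤ) * s.den)) • ((r + s) • x)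
        = ((r.den : ℤ) * s.den) • (((r + s).den : ℤ) • ((r + s) • x)) by
      rw [smul_smul]; congr 1; ring]
    rw [spec, smul_smul]
    rw [show (((r + s).den : ℤ) * ((r.den : ℤ) * s.den)) • (r • x)
        = (((r + s).den : ℤ) * s.den) • ((r.den : ℤ) • (r • x)) by
      rw [smul_smul]; congr 1; ring]
    rw [spec, smul_smul]
    rw [show (((r + s).den : ℤ) * ((r.den : ℤ) * s.den)) • (s • x)
        = (((r + s).den : ℤ) * r.den) • ((s.den : ℤ) • (s • x)) by
      rw [smul_smul]; congr 1; ring]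
    rw [spec, smul_smul, ← add_smul]
    congr 1
    have := rat_cross_add r s
    ring_nf
    ring_nf at this
    linarith [this]
  · -- mul_smul
    intro r s x
    apply smul_cancel htf (n := (((r * s).den : ℤ)) * ((r.den : ℤ) * s.den))
      (by exact mul_ne_zero (dz _) (mul_ne_zero (dz _) (dz _)))
    rw [show ((((r * s).den : ℤ)) * ((r.den : ℤ) * s.den)) • ((r * s) • x)
        = ((r.den : ℤ) * s.den) • (((r * s).den : ℤ) • ((r * s) • x)) by
      rw [smul_smul]; congr 1; ring]
    rw [spec, smul_smul]
    rw [show ((((r * s).den : ℤ)) * ((r.den : ℤ) * s.den)) • (r • (s • x))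
        = (((r * s).den : ℤ) * s.den) • ((r.den : ℤ) • (r • (s • x))) by
      rw [smul_smul]; congr 1; ring]
    rw [spec, smul_smul]
    rw [show ((((r * s).den : ℤ) * s.den) * r.num) • (s • x)
        = (((r * s).den : ℤ) * r.num) • ((s.den : ℤ) • (s • x)) by
      rw [smul_smul]; congr 1; ring]
    rw [spec, smul_smul]
    congr 1
    have := rat_cross_mul r s
    ring_nf
    ring_nf at this
    linarith [this]
  · -- one_smul
    intro x
    apply smul_cancel htf (n := (1 : ℤ)) one_ne_zero
    have := spec 1 x
    simpa using this

include hdiv htf in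
lemma exists_addEquiv_map {a b : A} (ha : a ≠ 0) (hb : b ≠ 0) :
    ∃ σ : A ≃+ A, σ a = b := by
  letI : Module ℚ A := qmodule hdiv htf
  have hzsmul : ∀ (q : ℚ) (v : A), q ≠ 0 → q • v = 0 → v = 0 := by
    intro q v hq hv
    have : q⁻¹ • q • v = v := by rw [smul_smul, inv_mul_cancel₀ hq, one_smul]
    rw [hv, smul_zero] at this
    exact this.symm
  by_cases hdep : ∃ q : ℚ, q • a = b
  · obtain ⟨q, hq⟩ := hdep
    have hq0 : q ≠ 0 := by
      rintro rfl
      rw [zero_smul] at hq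
      exact hb hq.symm
    refine ⟨{ toFun := fun v => q • v
              invFun := fun v => q⁻¹ • v
              left_inv := fun v => by
                dsimp only
                rw [smul_smul, inv_mul_cancel₀ hq0, one_smul]
              right_inv := fun v => by
                dsimp only
                rw [smul_smul, mul_inv_cancel₀ hq0, one_smul]
              map_add' := fun x y => smul_add q x y }, hq⟩
  · have li : LinearIndependent ℚ ![a, b] := by
      rw [LinearIndependent.pair_iff]
      intro s t hst
      by_cases ht : t = 0
      · subst ht
        rw [zero_smul, add_zero] at hst
        refine ⟨by_contra fun hs => ha (hzsmul s a hs hst), rfl⟩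
      · exfalso
        apply hdep
        refine ⟨t⁻¹ * (-s), ?_⟩
        have h2 : t • b = -(s • a) := by
          rw [add_comm] at hst
          exact add_eq_zero_iff_eq_neg.mp hst
        rw [mul_smul, neg_smul, ← h2, smul_smul, inv_mul_cancel₀ ht, one_smul]
    set W := Submodule.span ℚ (Set.range ![a, b]) with hW
    obtain ⟨W', hW'⟩ := Submodule.exists_isCompl W
    set bW : Module.Basis (Fin 2) ℚ W := Module.Basis.span li with hbW
    set e2 : W ≃ₗ[ℚ] W := bW.equiv bW (Equiv.swap 0 1) with he2
    set σL : A ≃ₗ[ℚ] A :=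
      ((W.prodEquivOfIsCompl W' hW').symm.trans
        ((e2.prodCongr (LinearEquiv.refl ℚ W')).trans (W.prodEquivOfIsCompl W' hW'))) with hσ
    have haW : a ∈ W := Submodule.subset_span ⟨0, rfl⟩
    have hcomp : σL a = b := by
      have h1 : (W.prodEquivOfIsCompl W' hW').symm a = (⟨a, haW⟩, 0) :=
        Submodule.prodEquivOfIsCompl_symm_apply_left W W' hW' ⟨a, haW⟩
      have h2 : (⟨a, haW⟩ : W) = bW 0 := by
        refine Subtype.ext ?_
        rw [hbW, Module.Basis.span_apply]
        rfl
      have h3 : e2 (bW 0) = bW 1 := by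
        rw [he2, Module.Basis.equiv_apply, Equiv.swap_apply_left]
      have h4 : ((bW 1 : W) : A) = b := by
        rw [hbW, Module.Basis.span_apply]
        rfl
      rw [hσ]
      simp only [LinearEquiv.trans_apply]
      rw [h1, h2]
      have h5 : (e2.prodCongr (LinearEquiv.refl ℚ W')) (bW 0, 0) = (bW 1, 0) := by
        simp [LinearEquiv.prodCongr_apply, h3]
      rw [h5]
      rw [Submodule.coe_prodEquivOfIsCompl']
      simp [h4]
    exact ⟨σL.toAddEquiv, hcomp⟩

end QMod

noncomputable instance commGroupD : CommGroup ↥(Dgrp G) :=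
  { (inferInstance : Group ↥(Dgrp G)) with
    mul_comm := fun a b => Subtype.ext
      ((Subgroup.mem_center_iff.mp (Dgrp_le_center a.2) (b : G)).symm) }

lemma Dgrp_div_sub [Finite (Orb G)] {e : ℕ} (he : 0 < e)
    (hetor : ∀ g : G, IsOfFinOrder g → g ^ e = 1)
    (a : ↥(Dgrp G)) {n : ℕ} (hn : 0 < n) : ∃ b : ↥(Dgrp G), b ^ n = a := by
  obtain ⟨d, hd, hdn⟩ := Dgrp_divisible he hetor a.2 hn
  exact ⟨⟨d, hd⟩, Subtype.ext (by simpa using hdn)⟩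

lemma D_zpow_root [Finite (Orb G)] {e : ℕ} (he : 0 < e)
    (hetor : ∀ g : G, IsOfFinOrder g → g ^ e = 1) :
    ∀ n : ℤ, n ≠ 0 → ∀ x : ↥(Dgrp G), ∃ y : ↥(Dgrp G), y ^ n = x := by
  intro n hn x
  obtain ⟨b, hb⟩ := Dgrp_div_sub he hetor x (n := n.natAbs) (Int.natAbs_pos.mpr hn)
  rcases Int.natAbs_eq n with heq | heq
  · exact ⟨b, by rw [heq, zpow_natCast, hb]⟩
  · refine ⟨b⁻¹, ?_⟩
    rw [heq, zpow_neg, inv_zpow, inv_inv, zpow_natCast, hb]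

lemma D_hdiv [Finite (Orb G)] {e : ℕ} (he : 0 < e)
    (hetor : ∀ g : G, IsOfFinOrder g → g ^ e = 1) :
    ∀ n : ℤ, n ≠ 0 → ∀ a : Additive ↥(Dgrp G), ∃ b, n • b = a := by
  intro n hn a
  obtain ⟨y, hy⟩ := D_zpow_root he hetor n hn (Additive.toMul a)
  refine ⟨Additive.ofMul y, ?_⟩
  rw [← ofMul_zpow, hy]; rfl

lemma D_htf {e : ℕ} (he : 0 < e)
    (hetor : ∀ g : G, IsOfFinOrder g → g ^ e = 1) :
    ∀ (n : ℤ) (a : Additive ↥(Dgrp G)), n ≠ 0 → n • a = 0 → a = 0 := by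
  intro n a hn h
  have hxp : (Additive.toMul a) ^ n = (1 : ↥(Dgrp G)) := by
    have h2 := congrArg (⇑(Additive.toMul (α := ↥(Dgrp G)))) h
    simpa using h2
  have hxn : (Additive.toMul a) ^ (n.natAbs) = (1 : ↥(Dgrp G)) := by
    rcases Int.natAbs_eq n with heq | heq
    · rw [← zpow_natCast, ← heq, hxp]
    · have h2 : (Additive.toMul a) ^ (-((n.natAbs : ℤ))) = (1 : ↥(Dgrp G)) := by
        rw [← heq]; exact hxp
      rw [zpow_neg, inv_eq_one] at h2
      rw [← zpow_natCast]
      exact h2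
  have htor : IsOfFinOrder ((Additive.toMul a : ↥(Dgrp G)) : G) := by
    refine isOfFinOrder_iff_pow_eq_one.mpr ⟨n.natAbs, Int.natAbs_pos.mpr hn, ?_⟩
    have h3 := congrArg ((Dgrp G).subtype) hxn
    simpa using h3
  have hx1 : (Additive.toMul a : ↥(Dgrp G)) = 1 :=
    Subtype.ext (Dgrp_torsionfree he hetor (Additive.toMul a : ↥(Dgrp G)).2 htor)
  calc a = Additive.ofMul (Additive.toMul a) := rfl
  _ = Additive.ofMul (1 : ↥(Dgrp G)) := by rw [hx1]
  _ = 0 := ofMul_one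

lemma exists_retraction [Finite (Orb G)]
    (hFC : ∀ g : G, {h : G | IsConj g h}.Finite)
    {e : ℕ} (he : 0 < e) (hetor : ∀ g : G, IsOfFinOrder g → g ^ e = 1) :
    ∃ f' : G →* ↥(Dgrp G), ∀ d : ↥(Dgrp G), f' ↑d = d := by
  classical
  letI : DivisibleBy (Additive ↥(Dgrp G)) ℤ :=
    { div := fun a n => if h : n = 0 then 0 else (D_hdiv he hetor n h a).choose
      div_zero := fun a => by simp
      div_cancel := fun {n} a hn => by
        simp only [dif_neg hn]
        exact (D_hdiv he hetor n hn a).choose_spec }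
  have baer := Module.Baer.of_divisible (Additive ↥(Dgrp G))
  set ι : ↥(Dgrp G) →* Abelianization G :=
    (Abelianization.of).comp (Dgrp G).subtype with hι_def
  have hι : Function.Injective ι := by
    rw [injective_iff_map_eq_one]
    intro d hd
    have hcomm : (d : G) ∈ commutator G := by
      have : Abelianization.of (d : G) = 1 := hd
      exact (QuotientGroup.eq_one_iff _).mp this
    have htor : IsOfFinOrder (d : G) := commutator_mem_torsion hFC hcomm
    exact Subtype.ext (Dgrp_torsionfree he hetor d.2 htor)
  have hι' : Function.Injective ⇑(MonoidHom.toAdditive ι) := fun a b h => hι h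
  obtain ⟨F, hF⟩ := baer.extension_property_addMonoidHom
    (MonoidHom.toAdditive ι) hι' (AddMonoidHom.id _)
  refine ⟨{ toFun := fun g => Additive.toMul (F (Additive.ofMul (Abelianization.of g)))
            map_one' := by simp
            map_mul' := fun x y => by
              simp only [map_mul, ofMul_mul, map_add, toMul_add] }, ?_⟩
  intro d
  have h1 := DFunLike.congr_fun hF (Additive.ofMul d)
  simp only [AddMonoidHom.coe_comp, Function.comp_apply, AddMonoidHom.id_apply] at h1
  have h2 : (MonoidHom.toAdditive ι) (Additive.ofMul d) =
      Additive.ofMul (Abelianization.of (d : G)) := rfl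
  rw [h2] at h1
  simp only [MonoidHom.coe_mk, OneHom.coe_mk]
  rw [h1]
  rfl
lemma isOfFinOrder_aut (φ : MulAut G) {g : G} :
    IsOfFinOrder (φ g) ↔ IsOfFinOrder g := by
  rw [← orderOf_pos_iff, ← orderOf_pos_iff, orderOf_aut]

lemma commD (d : ↥(Dgrp G)) (y : G) : Commute (↑d) y :=
  (Subgroup.mem_center_iff.mp (Dgrp_le_center d.2) y).symm

section Retraction

variable (f' : G →* ↥(Dgrp G)) (hf' : ∀ d : ↥(Dgrp G), f' ↑d = d)
variable {M : ℕ} (hM : 0 < M) (memD : ∀ g : G, g ^ M ∈ Dgrp G)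
variable {e : ℕ} (he : 0 < e) (hetor : ∀ g : G, IsOfFinOrder g → g ^ e = 1)
variable (htorfree : ∀ {g : G}, g ∈ Dgrp G → IsOfFinOrder g → g = 1)

include hf' hM memD he hetor htorfree

lemma tor_iff (g : G) : f' g = 1 ↔ IsOfFinOrder g := by
  constructor
  · intro h
    have h1 : f' (g ^ M) = 1 := by rw [map_pow, h, one_pow]
    have h2 : f' (g ^ M) = ⟨g ^ M, memD g⟩ := hf' ⟨g ^ M, memD g⟩
    have h3 : g ^ M = 1 := by
      have := h2.symm.trans h1
      exact congrArg Subtype.val this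
    exact isOfFinOrder_iff_pow_eq_one.mpr ⟨M, hM, h3⟩
  · intro h
    have h1 : (f' g) ^ e = 1 := by rw [← map_pow, hetor g h, map_one]
    have h2 : IsOfFinOrder ((f' g : G)) := by
      refine isOfFinOrder_iff_pow_eq_one.mpr ⟨e, he, ?_⟩
      have := congrArg ((Dgrp G).subtype) h1
      simpa using this
    exact Subtype.ext (htorfree (f' g).2 h2)

lemma decomp (g : G) : g = (g * (↑(f' g))⁻¹) * ↑(f' g) := by group

lemma tp_tor (g : G) : IsOfFinOrder (g * (↑(f' g))⁻¹) := by
  rw [← tor_iff f' hf' hM memD he hetor htorfree]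
  rw [map_mul, map_inv, hf']
  simp

lemma f'_uniq {g t : G} {d : ↥(Dgrp G)} (ht : IsOfFinOrder t) (hgd : g = t * ↑d) :
    f' g = d := by
  rw [hgd, map_mul, hf', (tor_iff f' hf' hM memD he hetor htorfree t).mpr ht, one_mul]

lemma f'_aut (φ : MulAut G) (g : G) :
    f' (φ g) = ⟨φ ↑(f' g), Dgrp_aut φ (f' g).2⟩ := by
  refine f'_uniq f' hf' hM memD he hetor htorfree (t := φ (g * (↑(f' g))⁻¹)) ?_ ?_
  · exact (isOfFinOrder_aut φ).mpr (tp_tor f' hf' hM memD he hetor htorfree g)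
  · rw [← map_mul]
    congr 1
    group

/-- an automorphism of `G` acting as `ψ` on the `D`-part and trivially on torsion parts -/
noncomputable def autD (ψ : ↥(Dgrp G) ≃* ↥(Dgrp G)) : G ≃* G where
  toFun g := g * ↑((f' g)⁻¹ * ψ (f' g))
  invFun g := g * ↑((f' g)⁻¹ * ψ.symm (f' g))
  left_inv g := by
    dsimp only
    have h1 : f' (g * ↑((f' g)⁻¹ * ψ (f' g))) = ψ (f' g) := by
      rw [map_mul, hf']
      simp
    rw [h1]
    have h2 : (↑((f' g)⁻¹ * ψ (f' g)) : G) * ↑((ψ (f' g))⁻¹ * ψ.symm (ψ (f' g))) =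
        ((↑(((f' g)⁻¹ * ψ (f' g)) * ((ψ (f' g))⁻¹ * ψ.symm (ψ (f' g))))) : G) := by
      push_cast
      group
    rw [mul_assoc, h2]
    have h3 : ((f' g)⁻¹ * ψ (f' g)) * ((ψ (f' g))⁻¹ * ψ.symm (ψ (f' g))) = 1 := by
      rw [MulEquiv.symm_apply_apply]
      group
    rw [h3]
    simp
  right_inv g := by
    dsimp only
    have h1 : f' (g * ↑((f' g)⁻¹ * ψ.symm (f' g))) = ψ.symm (f' g) := by
      rw [map_mul, hf']
      simp
    rw [h1]
    have h2 : (↑((f' g)⁻¹ * ψ.symm (f' g)) : G) * ↑((ψ.symm (f' g))⁻¹ * ψ (ψ.symm (f' g))) =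
        ((↑(((f' g)⁻¹ * ψ.symm (f' g)) * ((ψ.symm (f' g))⁻¹ * ψ (ψ.symm (f' g))))) : G) := by
      push_cast
      group
    rw [mul_assoc, h2]
    have h3 : ((f' g)⁻¹ * ψ.symm (f' g)) * ((ψ.symm (f' g))⁻¹ * ψ (ψ.symm (f' g))) = 1 := by
      rw [MulEquiv.apply_symm_apply]
      group
    rw [h3]
    simp
  map_mul' a b := by
    simp only [map_mul]
    set wa := (f' a)⁻¹ * ψ (f' a) with hwa
    set wb := (f' b)⁻¹ * ψ (f' b) with hwb
    have hw : (f' a * f' b)⁻¹ * (ψ (f' a) * ψ (f' b)) = wa * wb := by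
      rw [hwa, hwb, mul_inv_rev, mul_comm ((f' b)⁻¹) ((f' a)⁻¹), mul_mul_mul_comm]
    rw [hw]
    calc a * b * ↑(wa * wb) = a * b * (↑wa * ↑wb) := by rw [Subgroup.coe_mul]
    _ = a * (b * ↑wa) * ↑wb := by group
    _ = a * (↑wa * b) * ↑wb := by rw [(commD wa b).eq.symm]
    _ = a * ↑wa * (b * ↑wb) := by group

omit hM memD he hetor htorfree in
lemma autD_apply (ψ : ↥(Dgrp G) ≃* ↥(Dgrp G)) (g : G) :
    autD f' hf' ψ g = g * ↑((f' g)⁻¹ * ψ (f' g)) := rfl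

end Retraction

/-- build a `MulEquiv` on `D` from an `AddEquiv` of the additivization -/
noncomputable def mulEquivOfAdd (τ : Additive ↥(Dgrp G) ≃+ Additive ↥(Dgrp G)) :
    ↥(Dgrp G) ≃* ↥(Dgrp G) where
  toFun d := Additive.toMul (τ (Additive.ofMul d))
  invFun d := Additive.toMul (τ.symm (Additive.ofMul d))
  left_inv d := by simp
  right_inv d := by simp
  map_mul' a b := by
    rw [ofMul_mul, map_add, toMul_add]

end Stmt9

theorem stmt9 (G : Type*) [Group G] [Infinite G] (hFC : IsFCGroup G)
    (hfin : HasFinitelyManyAutOrbits G) (hodd : Odd (omegaOrbits G)) :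
    ∃ n : ℕ, 0 < n ∧ ∀ g : G, g ^ n = 1 := by
  classical
  haveI : Finite (Stmt9.Orb G) := hfin
  obtain ⟨e, he, hetor⟩ := Stmt9.exists_exponent (G := G)
  by_cases hall : ∀ g : G, IsOfFinOrder g
  · exact ⟨e, he, fun g => hetor g (hall g)⟩
  · exfalso
    push_neg at hall
    obtain ⟨x, hx⟩ := hall
    obtain ⟨c, hc⟩ := Stmt9.exists_classBound (G := G)
    have hK : ∀ g : G, g ^ (Nat.factorial c) ∈ Subgroup.center G :=
      Stmt9.pow_factorial_mem_center hFC hc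
    set M := Nat.factorial c * e with hMdef
    have hMpos : 0 < M := Nat.mul_pos (Nat.factorial_pos c) he
    have memD : ∀ g : G, g ^ M ∈ Stmt9.Dgrp G := by
      intro g n hn
      obtain ⟨z, hz, hzn⟩ := Stmt9.center_pow_div he hetor (hK g) hn
      exact ⟨z, hz, by rw [hzn, ← pow_mul]⟩
    have htorfree : ∀ {g : G}, g ∈ Stmt9.Dgrp G → IsOfFinOrder g → g = 1 :=
      fun hg ht => Stmt9.Dgrp_torsionfree he hetor hg ht
    obtain ⟨f', hf'⟩ := Stmt9.exists_retraction hFC he hetor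
    set d0 : ↥(Stmt9.Dgrp G) := ⟨x ^ M, memD x⟩ with hd0def
    have hd0 : d0 ≠ 1 := by
      intro h
      apply hx
      have hxm : x ^ M = 1 := congrArg Subtype.val h
      exact isOfFinOrder_iff_pow_eq_one.mpr ⟨M, hMpos, hxm⟩
    have torResp : ∀ a b : G, MulAction.orbitRel (MulAut G) G a b →
        IsOfFinOrder a = IsOfFinOrder b := by
      intro a b hab
      obtain ⟨φ, hφ⟩ := MulAction.mem_orbit_iff.mp hab
      rw [← hφ]
      exact propext (Stmt9.isOfFinOrder_aut φ)
    have tpTor : ∀ g : G, IsOfFinOrder (g * (↑(f' g))⁻¹) :=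
      Stmt9.tp_tor f' hf' hMpos memD he hetor @htorfree
    have tih := Stmt9.tor_iff f' hf' hMpos memD he hetor @htorfree
    let TOrb : Stmt9.Orb G → Prop := Quotient.lift (fun g => IsOfFinOrder g) torResp
    let Θ0 : G → {ω : Stmt9.Orb G // TOrb ω} × Bool := fun g =>
      (⟨Stmt9.ob (g * (↑(f' g))⁻¹), by exact tpTor g⟩, decide (IsOfFinOrder g))
    -- equivariance of the torsion part
    have htpAut : ∀ (φ : MulAut G) (b : G),
        (φ b) * (↑(f' (φ b)))⁻¹ = φ (b * (↑(f' b))⁻¹) := by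
      intro φ b
      have hfab := Stmt9.f'_aut f' hf' hMpos memD he hetor @htorfree φ b
      have : (↑(f' (φ b)) : G) = φ ↑(f' b) := by rw [hfab]
      rw [this, map_mul, map_inv]
    have ΘResp : ∀ a b : G, MulAction.orbitRel (MulAut G) G a b → Θ0 a = Θ0 b := by
      intro a b hab
      obtain ⟨φ, hφ⟩ := MulAction.mem_orbit_iff.mp hab
      have hφ' : φ b = a := hφ
      have h1 : Stmt9.ob (a * (↑(f' a))⁻¹) = Stmt9.ob (b * (↑(f' b))⁻¹) := by
        refine Stmt9.ob_eq_ob.mpr ⟨φ, ?_⟩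
        rw [← htpAut φ b, hφ']
      have h2 : IsOfFinOrder a = IsOfFinOrder b := torResp a b hab
      rw [Prod.ext_iff]
      refine ⟨Subtype.ext h1, ?_⟩
      show decide (IsOfFinOrder a) = decide (IsOfFinOrder b)
      rw [h2]
    have hsurj : Function.Surjective (Quotient.lift Θ0 ΘResp) := by
      rintro ⟨⟨ω, hω⟩, bb⟩
      obtain ⟨g, rfl⟩ : ∃ g, Stmt9.ob g = ω := ⟨ω.out, Quotient.out_eq ω⟩
      have hg : IsOfFinOrder g := hω
      have hf'g : f' g = 1 := (tih g).mpr hg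
      cases bb with
      | true =>
        refine ⟨Stmt9.ob g, ?_⟩
        show Θ0 g = _
        rw [Prod.ext_iff]
        constructor
        · refine Subtype.ext ?_
          show Stmt9.ob (g * (↑(f' g))⁻¹) = Stmt9.ob g
          rw [hf'g]
          norm_num
        · show decide (IsOfFinOrder g) = true
          exact decide_eq_true hg
      | false =>
        refine ⟨Stmt9.ob (g * ↑d0), ?_⟩
        show Θ0 (g * ↑d0) = _
        have h1 : f' (g * ↑d0) = d0 := by rw [map_mul, hf' d0, hf'g, one_mul]
        have h2 : ¬ IsOfFinOrder (g * ↑d0) := by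
          intro h'
          exact hd0 (h1.symm.trans ((tih _).mpr h'))
        rw [Prod.ext_iff]
        constructor
        · refine Subtype.ext ?_
          show Stmt9.ob ((g * ↑d0) * (↑(f' (g * ↑d0)))⁻¹) = Stmt9.ob g
          rw [h1]
          group
        · show decide (IsOfFinOrder (g * ↑d0)) = false
          exact decide_eq_false h2
    have hinj : Function.Injective (Quotient.lift Θ0 ΘResp) := by
      intro ωa ωb
      refine Quotient.inductionOn₂ ωa ωb ?_
      intro a b h
      have h' : Θ0 a = Θ0 b := h
      have h1 : Stmt9.ob (a * (↑(f' a))⁻¹) = Stmt9.ob (b * (↑(f' b))⁻¹) :=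
        Subtype.ext_iff.mp (Prod.ext_iff.mp h').1
      have h2 : IsOfFinOrder a ↔ IsOfFinOrder b := by
        have := (Prod.ext_iff.mp h').2
        simpa [Θ0, decide_eq_decide] using this
      show Stmt9.ob a = Stmt9.ob b
      by_cases hta : IsOfFinOrder a
      · have htb := h2.mp hta
        have hfa : f' a = 1 := (tih a).mpr hta
        have hfb : f' b = 1 := (tih b).mpr htb
        rw [hfa, hfb] at h1
        simpa using h1
      · have htb : ¬ IsOfFinOrder b := fun h'' => hta (h2.mpr h'')
        have hfa : f' a ≠ 1 := fun h'' => hta ((tih a).mp h'')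
        have hfb : f' b ≠ 1 := fun h'' => htb ((tih b).mp h'')
        obtain ⟨φ, hφ⟩ := Stmt9.ob_eq_ob.mp h1
        -- hφ : φ (b * (↑(f' b))⁻¹) = a * (↑(f' a))⁻¹
        have hfab := Stmt9.f'_aut f' hf' hMpos memD he hetor @htorfree φ b
        have hcne : f' (φ b) ≠ 1 := by
          intro h''
          apply hfb
          have hco : (↑(f' (φ b)) : G) = φ ↑(f' b) := by rw [hfab]
          rw [h''] at hco
          have : φ ↑(f' b) = φ 1 := by rw [map_one]; exact hco.symm
          have := φ.injective this
          exact Subtype.ext (by simpa using this)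
        have hane : Additive.ofMul (f' (φ b)) ≠ (0 : Additive ↥(Stmt9.Dgrp G)) := by
          intro h''
          exact hcne (Additive.ofMul.injective (h''.trans (ofMul_one (α := ↥(Stmt9.Dgrp G))).symm))
        have hbne : Additive.ofMul (f' a) ≠ (0 : Additive ↥(Stmt9.Dgrp G)) := by
          intro h''
          exact hfa (Additive.ofMul.injective (h''.trans (ofMul_one (α := ↥(Stmt9.Dgrp G))).symm))
        obtain ⟨τ, hτ⟩ := Stmt9.exists_addEquiv_map
          (Stmt9.D_hdiv he hetor) (Stmt9.D_htf he hetor) hane hbne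
        set ψ := Stmt9.mulEquivOfAdd τ with hψdef
        have hψ : ψ (f' (φ b)) = f' a := by
          show Additive.toMul (τ (Additive.ofMul (f' (φ b)))) = f' a
          rw [hτ]
          rfl
        set α := Stmt9.autD f' hf' ψ with hαdef
        have hα : α (φ b) = a := by
          rw [hαdef, Stmt9.autD_apply, hψ, Subgroup.coe_mul, ← mul_assoc]
          have htp := htpAut φ b
          rw [hφ] at htp
          -- htp : φ b * (↑(f' (φ b)))⁻¹ = a * (↑(f' a))⁻¹
          have : (↑(f' (φ b))⁻¹ : G) = (↑(f' (φ b)) : G)⁻¹ := by simp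
          rw [this, htp]
          group
        exact Stmt9.ob_eq_ob.mpr ⟨φ.trans α, by simpa using hα⟩
    have hcard := Nat.card_eq_of_bijective _ ⟨hinj, hsurj⟩
    rw [Nat.card_prod] at hcard
    have hbool : Nat.card Bool = 2 := by simp [Nat.card_eq_fintype_card]
    rw [hbool] at hcard
    have hodd' : Odd (Nat.card (Stmt9.Orb G)) := hodd
    rw [hcard] at hodd'
    obtain ⟨m, hm⟩ := hodd'
    omega
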